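/- Let C be a convex subset of a real vector space. Then x belongs to the intrinsic core of C (i.e., for every y ∈ C there exists z ∈ C with x in the open segment (y,z)) if and only if F_min(x,C) = C. -/

import Mathlib

open Pointwise

/-- A face of a convex set `C`: a convex subset `F ⊆ C` such that whenever a point of `F`
lies in the open segment between two points of `C`, both endpoints belong to `F`. -/
def IsFace {X : Type*} [AddCommGroup X] [Module ℝ X] (C F : Set X) : Prop :=
  F ⊆ C ∧ Convex ℝ F ∧
    ∀ x ∈ F, ∀ y ∈ C, ∀ z ∈ C, x ∈ openSegment ℝ y z → y ∈ F ∧ z ∈ F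

/-- The minimal face of `C` containing `x`: the intersection of all faces containing `x`. -/
def minFace {X : Type*} [AddCommGroup X] [Module ℝ X] (C : Set X) (x : X) : Set X :=
  ⋂₀ {F | IsFace C F ∧ x ∈ F}

/-- The conic hull of a set. -/
def coneHull {X : Type*} [AddCommGroup X] [Module ℝ X] (S : Set X) : Set X :=
  {w | ∃ (a : ℝ) (s : X), 0 ≤ a ∧ s ∈ S ∧ w = a • s}

/-- The intrinsic core of a convex set. -/
def icr {X : Type*} [AddCommGroup X] [Module ℝ X] (C : Set X) : Set X :=
  {x ∈ C | ∀ y ∈ C, ∃ z ∈ C, x ∈ openSegment ℝ y z}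

/-- The face relative interior of a convex set in a topological vector space. -/
def fri {X : Type*} [AddCommGroup X] [Module ℝ X] [TopologicalSpace X] (C : Set X) : Set X :=
  {x ∈ C | C ⊆ closure (minFace C x)}

/-- `x ∈ icr C` iff the minimal face of `x` in `C` is all of `C`. -/

private lemma face_aux' {X : Type*} [AddCommGroup X] [Module ℝ X]
    {C : Set X} (hC : Convex ℝ C) {x p q y z : X}
    (hq : q ∈ C) (hz : z ∈ C)
    (hxpq : x ∈ openSegment ℝ p q) (hpyz : p ∈ openSegment ℝ y z) :
    ∃ r ∈ C, x ∈ openSegment ℝ y r := by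
  obtain ⟨b, bq, hb, hbq, hsb, hxe⟩ := hxpq
  obtain ⟨a, az, ha, haz, hsa, hpe⟩ := hpyz
  have h1 : (0:ℝ) < 1 - b * a := by nlinarith
  refine ⟨(b * az / (1 - b*a)) • z + (bq / (1 - b*a)) • q, ?_, ?_⟩
  · apply hC hz hq (by positivity) (by positivity)
    field_simp
    nlinarith
  · refine ⟨b*a, 1 - b*a, by positivity, h1, by ring, ?_⟩
    rw [← hxe, ← hpe]
    match_scalars <;> field_simp

private lemma conv_aux' {X : Type*} [AddCommGroup X] [Module ℝ X]
    {C : Set X} (hC : Convex ℝ C) {x w1 w2 z1 z2 : X}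
    (hz1 : z1 ∈ C) (hz2 : z2 ∈ C)
    (h1 : x ∈ openSegment ℝ w1 z1) (h2 : x ∈ openSegment ℝ w2 z2)
    {t1 t2 : ℝ} (ht1 : 0 ≤ t1) (ht2 : 0 ≤ t2) (hts : t1 + t2 = 1) :
    ∃ z ∈ C, x ∈ openSegment ℝ (t1 • w1 + t2 • w2) z := by
  obtain ⟨a1, b1, ha1, hb1, hab1, hx1⟩ := h1
  obtain ⟨a2, b2, ha2, hb2, hab2, hx2⟩ := h2
  obtain rfl : b1 = 1 - a1 := by linarith
  obtain rfl : b2 = 1 - a2 := by linarith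
  obtain rfl : t2 = 1 - t1 := by linarith
  set D : ℝ := a1 * (1 - t1) + a2 * t1 with hD_def
  have hD : 0 < D := by
    rcases eq_or_lt_of_le ht1 with h | h
    · nlinarith
    · nlinarith
  set s : ℝ := t1 * a2 / D with hs_def
  have hs0 : 0 ≤ s := by positivity
  have hs1 : s ≤ 1 := by
    rw [hs_def, div_le_one hD]; nlinarith
  set E : ℝ := s * (1 - a1) + (1 - s) * (1 - a2) with hE_def
  have hE : 0 < E := by
    rcases eq_or_lt_of_le hs1 with h | h
    · rw [hE_def, ← h]; nlinarith
    · nlinarith [mul_pos (sub_pos.2 h) hb2, mul_nonneg hs0 hb1.le]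
  have hL : 0 < 1 - E := by
    have : 1 - E = s * a1 + (1 - s) * a2 := by rw [hE_def]; ring
    rw [this]
    rcases eq_or_lt_of_le hs1 with h | h
    · rw [← h]; nlinarith
    · nlinarith [mul_pos (sub_pos.2 h) ha2, mul_nonneg hs0 ha1.le]
  refine ⟨(s * (1 - a1) / E) • z1 + ((1 - s) * (1 - a2) / E) • z2, ?_, ?_⟩
  · apply hC hz1 hz2
    · positivity
    · have : 0 ≤ (1 - s) * (1 - a2) := by nlinarith
      positivity
    · field_simp
      exact hE_def.symm
  · refine ⟨1 - E, E, hL, hE, by ring, ?_⟩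
    have key : (1 - E) • (t1 • w1 + (1 - t1) • w2)
        + E • ((s * (1 - a1) / E) • z1 + ((1 - s) * (1 - a2) / E) • z2)
        = s • (a1 • w1 + (1 - a1) • z1) + (1 - s) • (a2 • w2 + (1 - a2) • z2) := by
      have c1 : (1 - E) * t1 = s * a1 := by
        rw [hE_def, hs_def]; field_simp; ring
      have c2 : (1 - E) * (1 - t1) = (1 - s) * a2 := by
        rw [hE_def, hs_def]; field_simp; ring
      have c3 : E * (s * (1 - a1) / E) = s * (1 - a1) := by
        field_simp
      have c4 : E * ((1 - s) * (1 - a2) / E) = (1 - s) * (1 - a2) := by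
        field_simp
      match_scalars
      · linear_combination c1
      · linear_combination c2
      · linear_combination c3
      · linear_combination c4
    rw [key, hx1, hx2]
    module

theorem mem_icr_iff_minFace_eq' {X : Type*} [AddCommGroup X] [Module ℝ X]
    (C : Set X) (hC : Convex ℝ C) (x : X) (hx : x ∈ C) :
    (x ∈ C ∧ ∀ y ∈ C, ∃ z ∈ C, x ∈ openSegment ℝ y z) ↔
      (⋂₀ {F | (F ⊆ C ∧ Convex ℝ F ∧
        ∀ x ∈ F, ∀ y ∈ C, ∀ z ∈ C, x ∈ openSegment ℝ y z → y ∈ F ∧ z ∈ F) ∧ x ∈ F}) = C := by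
  constructor
  · rintro ⟨-, h⟩
    apply subset_antisymm
    · exact Set.sInter_subset_of_mem ⟨⟨subset_rfl, hC, fun _ _ y hy z hz _ => ⟨hy, hz⟩⟩, hx⟩
    · intro y hy
      rintro F ⟨⟨hFC, -, hface⟩, hxF⟩
      obtain ⟨z, hz, hxyz⟩ := h y hy
      exact (hface x hxF y hy z hz hxyz).1
  · intro h
    refine ⟨hx, fun y hy => ?_⟩
    set F : Set X := {w | w ∈ C ∧ ∃ z ∈ C, x ∈ openSegment ℝ w z} with hF_def
    have hxF : x ∈ F := ⟨hx, x, hx, by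
      rw [openSegment_same]; exact Set.mem_singleton _⟩
    have hface : (F ⊆ C ∧ Convex ℝ F ∧
        ∀ x ∈ F, ∀ y ∈ C, ∀ z ∈ C, x ∈ openSegment ℝ y z → y ∈ F ∧ z ∈ F) := by
      refine ⟨fun w hw => hw.1, ?_, ?_⟩
      · rintro w1 ⟨hw1C, z1, hz1, hxw1⟩ w2 ⟨hw2C, z2, hz2, hxw2⟩ t1 t2 ht1 ht2 hts
        exact ⟨hC hw1C hw2C ht1 ht2 hts, conv_aux' hC hz1 hz2 hxw1 hxw2 ht1 ht2 hts⟩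
      · rintro p ⟨hpC, q, hq, hxpq⟩ y hy z hz hpyz
        refine ⟨⟨hy, face_aux' hC hq hz hxpq hpyz⟩,
          ⟨hz, face_aux' hC hq hy hxpq ?_⟩⟩
        rwa [openSegment_symm]
    have : y ∈ F := by
      rw [← h] at hy
      exact hy F ⟨hface, hxF⟩
    exact this.2


theorem mem_icr_iff_minFace_eq {X : Type*} [AddCommGroup X] [Module ℝ X]
    (C : Set X) (hC : Convex ℝ C) (x : X) (hx : x ∈ C) :
    x ∈ icr C ↔ minFace C x = C :=
  mem_icr_iff_minFace_eq' C hC x hx
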